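/- Let Z be an n×n complex matrix and ϱ a nonzero complex number with argument θ satisfying |θ| ≤ π/2 (i.e., Re(ϱ) ≥ 0). Write the diagonal entries as z_ii = r_ii e^{iφ_ii} with r_ii = |z_ii|, and let R_i = Σ_{j≠i} |z_ij| be the i-th off-diagonal row sum. If for every i we have r_ii·sin|θ| ≥ R_i and φ_ii − 2|θ| > π/2 (interpreting φ_ii as the principal argument of z_ii, lying in the left half-plane), then every eigenvalue of the matrix ϱZ has strictly negative real part. -/

import Mathlib

open Matrix Complex Finset

/-- If all Geršgorin discs of `Z` lie in the left half-plane with the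
diagonal entries `z_ii = r_ii e^{i φ_ii}` satisfying `r_ii sin|θ| ≥ R_i` and
`φ_ii - 2|θ| > π/2` (θ the argument of ϱ, Re ϱ ≥ 0, ϱ ≠ 0), then every
eigenvalue of `ϱ Z` has strictly negative real part. -/
theorem stmt0 {n : ℕ} (Z : Matrix (Fin n) (Fin n) ℂ) (ϱ : ℂ)
    (hϱ0 : ϱ ≠ 0) (hϱre : 0 ≤ ϱ.re)
    (θ : ℝ) (hθ : θ = ϱ.arg)
    (R : Fin n → ℝ) (hR : ∀ i, R i = ∑ j ∈ univ \ {i}, ‖Z i j‖)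
    (hdiag : ∀ i, (Z i i).re < 0)
    (h1 : ∀ i, ‖Z i i‖ * Real.sin |θ| ≥ R i)
    (h2 : ∀ i, (Z i i).arg - 2 * |θ| > Real.pi / 2) :
    ∀ μ ∈ spectrum ℂ (ϱ • Z), μ.re < 0 := by
  intro μ hμ
  set ν : ℂ := ϱ⁻¹ * μ with hν
  -- μ/ϱ is in the spectrum of Z
  have hspec : ν ∈ spectrum ℂ Z := by
    have h := spectrum.unit_smul_eq_smul (R := ℂ) Z (Units.mk0 ϱ hϱ0)
    rw [show ϱ • Z = (Units.mk0 ϱ hϱ0 : ℂˣ) • Z from rfl, h] at hμ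
    obtain ⟨x, hx, hxe⟩ := hμ
    have : x = ν := by
      rw [hν, ← hxe]
      simp [Units.smul_def, smul_eq_mul]
      field_simp
    rwa [this] at hx
  -- hence it is an eigenvalue of toLin' Z
  have heig : Module.End.HasEigenvalue (Matrix.toLin' Z) ν := by
    rw [Module.End.hasEigenvalue_iff_mem_spectrum]
    rwa [show (Matrix.toLin' Z : (Fin n → ℂ) →ₗ[ℂ] Fin n → ℂ)
        = Matrix.toLinAlgEquiv' Z from rfl,
      AlgEquiv.spectrum_eq (Matrix.toLinAlgEquiv' : Matrix (Fin n) (Fin n) ℂ ≃ₐ[ℂ] _) Z]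
  obtain ⟨i, hi⟩ := eigenvalue_mem_ball heig
  rw [Metric.mem_closedBall, dist_eq_norm] at hi
  have hiR : ‖ν - Z i i‖ ≤ R i := by
    rw [hR i, Finset.sdiff_singleton_eq_erase]
    simpa using hi
  set z : ℂ := Z i i with hz
  set φ : ℝ := z.arg with hφ
  set t : ℝ := |θ| with ht
  have ht0 : 0 ≤ t := abs_nonneg θ
  have hθle : θ ≤ t := le_abs_self θ
  have hθge : -t ≤ θ := neg_abs_le θ
  have hπ : 0 < Real.pi := Real.pi_pos
  have hφπ : φ ≤ Real.pi := Complex.arg_le_pi z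
  have hφlb : Real.pi / 2 + 2 * t < φ := by have := h2 i; rw [← hz, ← hφ, ← ht] at *; linarith
  have ht4 : t < Real.pi / 4 := by linarith
  -- key trigonometric inequality
  have key : Real.cos (θ + φ) + Real.sin t < 0 := by
    rw [← Real.cos_pi_div_two_sub t, Real.cos_add_cos]
    have hA : Real.cos ((θ + φ + (Real.pi / 2 - t)) / 2) < 0 :=
      Real.cos_neg_of_pi_div_two_lt_of_lt (by linarith) (by linarith)
    have hB : 0 < Real.cos ((θ + φ - (Real.pi / 2 - t)) / 2) :=
      Real.cos_pos_of_mem_Ioo ⟨by linarith, by linarith⟩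
    nlinarith
  have hz0 : z ≠ 0 := fun h => by
    have := hdiag i; rw [← hz, h] at this; simp at this
  have hr : 0 < ‖z‖ := norm_pos_iff.mpr hz0
  have haϱ : 0 < ‖ϱ‖ := norm_pos_iff.mpr hϱ0
  -- decompose real/imag parts in polar form
  have hϱr : ϱ.re = ‖ϱ‖ * Real.cos θ := by
    rw [hθ, Complex.cos_arg hϱ0]; field_simp
  have hϱi : ϱ.im = ‖ϱ‖ * Real.sin θ := by
    rw [hθ, Complex.sin_arg]; field_simp
  have hzr : z.re = ‖z‖ * Real.cos φ := by
    rw [hφ, Complex.cos_arg hz0]; field_simp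
  have hzi : z.im = ‖z‖ * Real.sin φ := by
    rw [hφ, Complex.sin_arg]; field_simp
  have hre : (ϱ * z).re = ‖ϱ‖ * ‖z‖ * Real.cos (θ + φ) := by
    rw [Complex.mul_re, hϱr, hϱi, hzr, hzi, Real.cos_add]; ring
  have hμν : μ = ϱ * ν := by rw [hν]; field_simp
  have hsplit : μ.re = (ϱ * z).re + (ϱ * (ν - z)).re := by
    rw [← Complex.add_re, ← mul_add]
    congr 1
    rw [hμν]; ring
  have hbound : (ϱ * (ν - z)).re ≤ ‖ϱ‖ * R i := by
    calc (ϱ * (ν - z)).re ≤ ‖ϱ * (ν - z)‖ := Complex.re_le_norm _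
      _ = ‖ϱ‖ * ‖ν - z‖ := norm_mul _ _
      _ ≤ ‖ϱ‖ * R i := by
          exact mul_le_mul_of_nonneg_left hiR (le_of_lt haϱ)
  have hRle : R i ≤ ‖z‖ * Real.sin t := by
    have := h1 i; rw [← hz] at this; linarith
  calc μ.re = (ϱ * z).re + (ϱ * (ν - z)).re := hsplit
    _ ≤ ‖ϱ‖ * ‖z‖ * Real.cos (θ + φ) + ‖ϱ‖ * (‖z‖ * Real.sin t) := by
        rw [hre]
        have := hbound.trans (mul_le_mul_of_nonneg_left hRle (le_of_lt haϱ))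
        linarith
    _ = ‖ϱ‖ * ‖z‖ * (Real.cos (θ + φ) + Real.sin t) := by ring
    _ < 0 := mul_neg_of_pos_of_neg (by positivity) key
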